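/- Unfolding a cost-optimal type DAG into a tree does not necessarily yield a cost-optimal type tree: there exists a displacement sequence D such that the tree obtained by unfolding some cost-minimal DAG representation of D (cost counted once per DAG node) is not a least-cost tree representation of D. -/

import Mathlib

inductive TT : Type where
  | con : ℕ → TT
  | vec : ℕ → ℤ → TT → TT
  | idx : List ℤ → TT → TT
  | strc : List (ℤ × TT) → TT

theorem TT.sizeOf_snd_lt {ps : List (ℤ × TT)} (p : {x // x ∈ ps}) :
    sizeOf (p.1).2 < sizeOf (TT.strc ps) := by
  obtain ⟨⟨a, b⟩, hp⟩ := p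
  have := List.sizeOf_lt_of_mem hp
  simp at this ⊢
  omega

def flatten : TT → List ℤ
  | .con c => (List.range c).map (fun i => (i : ℤ))
  | .vec c d C => (List.range c).flatMap (fun i => (flatten C).map (· + (i : ℤ) * d))
  | .idx I C => I.flatMap (fun s => (flatten C).map (· + s))
  | .strc ps => ps.attach.flatMap (fun p => (flatten p.1.2).map (· + p.1.1))
decreasing_by
  all_goals first
  | exact TT.sizeOf_snd_lt _
  | decreasing_tactic

def cost (kc kv ki ks kl : ℕ) : TT → ℕ
  | .con _ => kc
  | .vec _ _ C => kv + cost kc kv ki ks kl C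
  | .idx I C => ki + I.length * kl + cost kc kv ki ks kl C
  | .strc ps => ks + 2 * ps.length * kl + (ps.attach.map (fun p => cost kc kv ki ks kl p.1.2)).sum
decreasing_by
  all_goals first
  | exact TT.sizeOf_snd_lt _
  | decreasing_tactic

/-- A node of a type DAG whose children are references into a pool of `m` nodes. -/
inductive DNode (m : ℕ) : Type where
  | con : ℕ → DNode m
  | vec : ℕ → ℤ → Fin m → DNode m
  | idx : List ℤ → Fin m → DNode m
  | strc : List (ℤ × Fin m) → DNode m

/-- The child references of a DAG node. -/
def DNode.children {m : ℕ} : DNode m → List (Fin m)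
  | .con _ => []
  | .vec _ _ j => [j]
  | .idx _ j => [j]
  | .strc ps => ps.map Prod.snd

/-- A type DAG: a pool of nodes where every child reference points to a node with a
strictly smaller index (guaranteeing acyclicity); the root is the node with the
largest index. -/
structure DAG : Type where
  m : ℕ
  hm : 0 < m
  nodes : Fin m → DNode m
  acyc : ∀ i : Fin m, ∀ j ∈ (nodes i).children, (j : ℕ) < (i : ℕ)

def DAG.root (G : DAG) : Fin G.m := ⟨G.m - 1, by have := G.hm; omega⟩

/-- Flattening of the sub-DAG rooted at node `i`. -/
def DAG.flattenAt (G : DAG) (i : Fin G.m) : List ℤ :=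
  match hn : G.nodes i with
  | .con c => (List.range c).map (fun k => (k : ℤ))
  | .vec c d j =>
      (List.range c).flatMap (fun k => (G.flattenAt j).map (· + (k : ℤ) * d))
  | .idx I j => I.flatMap (fun s => (G.flattenAt j).map (· + s))
  | .strc ps => ps.attach.flatMap (fun p => (G.flattenAt p.1.2).map (· + p.1.1))
termination_by (i : ℕ)
decreasing_by
  · exact G.acyc i j (by rw [hn]; simp [DNode.children])
  · exact G.acyc i j (by rw [hn]; simp [DNode.children])
  · exact G.acyc i p.1.2 (by
      rw [hn]; simp only [DNode.children, List.mem_map]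
      exact ⟨p.1, p.2, rfl⟩)

/-- The displacement sequence represented by a type DAG. -/
def DAG.flatten (G : DAG) : List ℤ := G.flattenAt G.root

/-- The cost of a single DAG node: all node constants equal to `K`, lookup cost 1. -/
def DNode.cost (K : ℕ) {m : ℕ} : DNode m → ℕ
  | .con _ => K
  | .vec _ _ _ => K
  | .idx I _ => K + I.length
  | .strc ps => K + 2 * ps.length

/-- The cost of a type DAG: each node is counted exactly once. -/
def DAG.cost (K : ℕ) (G : DAG) : ℕ :=
  ∑ i : Fin G.m, (G.nodes i).cost K

/-- Unfolding the sub-DAG rooted at node `i` into a type tree. -/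
def DAG.unfoldAt (G : DAG) (i : Fin G.m) : TT :=
  match hn : G.nodes i with
  | .con c => .con c
  | .vec c d j => .vec c d (G.unfoldAt j)
  | .idx I j => .idx I (G.unfoldAt j)
  | .strc ps => .strc (ps.attach.map (fun p => (p.1.1, G.unfoldAt p.1.2)))
termination_by (i : ℕ)
decreasing_by
  · exact G.acyc i j (by rw [hn]; simp [DNode.children])
  · exact G.acyc i j (by rw [hn]; simp [DNode.children])
  · exact G.acyc i p.1.2 (by
      rw [hn]; simp only [DNode.children, List.mem_map]
      exact ⟨p.1, p.2, rfl⟩)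

/-- The tree obtained by unfolding a type DAG. -/
def DAG.unfold (G : DAG) : TT := G.unfoldAt G.root

lemma flatMap_single {α β : Type} (l : List α) (f : α → β) :
    l.flatMap (fun a => [f a]) = l.map f := by
  induction l with
  | nil => rfl
  | cons a l ih => rw [List.flatMap_cons, List.map_cons, ih]; rfl

lemma flattenAt_con (G : DAG) (i : Fin G.m) (c : ℕ) (h : G.nodes i = .con c) :
    G.flattenAt i = (List.range c).map (fun (k : ℕ) => (k : ℤ)) := by
  rw [DAG.flattenAt]
  split <;> rename_i heq <;> rw [h] at heq
  · injection heq with h1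
    subst h1
    simp only [List.map_id', List.pure_def, List.bind_eq_flatMap, flatMap_single]
  · exact absurd heq (by simp)
  · exact absurd heq (by simp)
  · exact absurd heq (by simp)

lemma flattenAt_vec (G : DAG) (i : Fin G.m) (c : ℕ) (d : ℤ) (j : Fin G.m) (h : G.nodes i = .vec c d j) :
    G.flattenAt i = (List.range c).flatMap (fun (k : ℕ) => (G.flattenAt j).map (· + (k : ℤ) * d)) := by
  rw [DAG.flattenAt]
  split <;> rename_i heq <;> rw [h] at heq
  · exact absurd heq (by simp)
  · injection heq with h1 h2 h3
    subst h1; subst h2; subst h3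
    simp only [List.bind_eq_flatMap, List.pure_def, List.flatMap_assoc, List.flatMap_cons,
      List.flatMap_nil, List.append_nil]
  · exact absurd heq (by simp)
  · exact absurd heq (by simp)

lemma flattenAt_idx (G : DAG) (i : Fin G.m) (I : List ℤ) (j : Fin G.m) (h : G.nodes i = .idx I j) :
    G.flattenAt i = I.flatMap (fun s => (G.flattenAt j).map (· + s)) := by
  rw [DAG.flattenAt]
  split <;> rename_i heq <;> rw [h] at heq
  · exact absurd heq (by simp)
  · exact absurd heq (by simp)
  · injection heq with h1 h2
    subst h1; subst h2
    rfl
  · exact absurd heq (by simp)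

lemma flattenAt_strc (G : DAG) (i : Fin G.m) (ps : List (ℤ × Fin G.m)) (h : G.nodes i = .strc ps) :
    G.flattenAt i = ps.flatMap (fun pr => (G.flattenAt pr.2).map (· + pr.1)) := by
  rw [DAG.flattenAt]
  split <;> rename_i heq <;> rw [h] at heq
  · exact absurd heq (by simp)
  · exact absurd heq (by simp)
  · exact absurd heq (by simp)
  · injection heq with h2
    subst h2
    conv_rhs => rw [← List.attach_map_subtype_val ps]
    rw [List.flatMap_map]

/-! ### The displacement sequence -/

def Dlist (K : ℕ) : List ℤ := (List.range (K+3)).map (fun (k : ℕ) => (k:ℤ)*2) ++ [2*(K:ℤ)+11]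

lemma Dlist_length (K : ℕ) : (Dlist K).length = K + 4 := by
  rw [Dlist]
  rw [List.length_append, List.length_map, List.length_range]
  rfl

lemma Dlist_ne_nil (K : ℕ) : Dlist K ≠ [] := by
  intro h
  have := Dlist_length K
  rw [h] at this
  simp at this

lemma Dlist_getElem? (K : ℕ) (t : ℕ) (h : t < K + 4) :
    (Dlist K)[t]? = some (if t = K + 3 then 2*(K:ℤ)+11 else (t:ℤ)*2) := by
  by_cases ht : t = K + 3
  · subst ht
    rw [Dlist, List.getElem?_append_right (by rw [List.length_map, List.length_range])]
    rw [List.length_map, List.length_range]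
    simp
  · have ht' : t < K + 3 := by omega
    rw [Dlist, List.getElem?_append_left (by rw [List.length_map, List.length_range]; exact ht')]
    rw [List.getElem?_map, List.getElem?_range ht']
    simp [ht]

/-- The central difference lemma: adjacent differences in `D` are `2` except the
last one which is `7`. -/
lemma diffD (K : ℕ) (L₁ : List ℤ) (u v : ℤ) (L₂ : List ℤ)
    (h : L₁ ++ u :: v :: L₂ = Dlist K) :
    (L₂ = [] → v - u = 7) ∧ (L₂ ≠ [] → v - u = 2) := by
  have hlen : L₁.length + 2 + L₂.length = K + 4 := by
    have := congrArg List.length h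
    rw [Dlist_length K] at this
    simp at this
    omega
  have hu : (Dlist K)[L₁.length]? = some u := by
    rw [← h, List.getElem?_append_right (le_refl _)]
    simp
  have hv : (Dlist K)[L₁.length + 1]? = some v := by
    rw [← h, List.getElem?_append_right (by omega)]
    have h1 : L₁.length + 1 - L₁.length = 1 := by omega
    rw [h1]
    simp
  rw [Dlist_getElem? K _ (by omega)] at hu
  rw [Dlist_getElem? K _ (by omega)] at hv
  have hu' := Option.some_injective _ hu
  have hv' := Option.some_injective _ hv
  constructor
  · intro h2
    subst h2
    have h1 : L₁.length + 1 = K + 3 := by simpa using hlen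
    rw [if_pos h1] at hv'
    rw [if_neg (by omega)] at hu'
    have hc : (L₁.length : ℤ) = (K : ℤ) + 2 := by
      have : L₁.length = K + 2 := by omega
      rw [this]; push_cast; ring
    rw [← hv', ← hu', hc]
    ring
  · intro h2
    have hL2 : 1 ≤ L₂.length := by
      cases L₂ with
      | nil => simp at h2
      | cons a l => simp
    rw [if_neg (by omega)] at hv'
    rw [if_neg (by omega)] at hu'
    rw [← hv', ← hu']
    push_cast
    ring

lemma diffD_or (K : ℕ) (L₁ : List ℤ) (u v : ℤ) (L₂ : List ℤ)
    (h : L₁ ++ u :: v :: L₂ = Dlist K) : v - u = 7 ∨ v - u = 2 := by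
  rcases diffD K L₁ u v L₂ h with ⟨h7, h2⟩
  by_cases hL : L₂ = []
  · exact Or.inl (h7 hL)
  · exact Or.inr (h2 hL)

/-- adjacent pair inside an infix of `D` -/
lemma diffD_infix (K : ℕ) (Y : List ℤ) (u v : ℤ) (T : List ℤ)
    (h : (Y ++ u :: v :: T) <:+: Dlist K) : v - u = 7 ∨ v - u = 2 := by
  obtain ⟨A, B, hAB⟩ := h
  apply diffD_or K (A ++ Y) u v (T ++ B)
  rw [← hAB]
  simp

/-! ### list utilities -/

lemma exists_last_two (X : List ℤ) (h : 2 ≤ X.length) :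
    ∃ Y u v, X = Y ++ [u, v] := by
  induction X with
  | nil => simp at h
  | cons a l ih =>
    by_cases hl : 2 ≤ l.length
    · obtain ⟨Y, u, v, hY⟩ := ih hl
      exact ⟨a :: Y, u, v, by rw [hY]; rfl⟩
    · have hl1 : l.length = 1 := by
        simp at h
        omega
      obtain ⟨b, hb⟩ := List.length_eq_one_iff.mp hl1
      exact ⟨[], a, b, by rw [hb]; rfl⟩

lemma map_shift_shift (l : List ℤ) (a b : ℤ) :
    (l.map (· + a)).map (· + b) = l.map (· + (a + b)) := by
  rw [List.map_map]
  congr 1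
  funext x
  simp [add_assoc]

lemma map_shift_zero (l : List ℤ) : l.map (· + (0:ℤ)) = l := by
  simp

/-- the crucial "copies" contradiction: `D` is not a concatenation of two or more
shifted copies of a common list of length at least two. -/
lemma copies_contra (K : ℕ) {α : Type} (A : List α) (f : α → ℤ) (X : List ℤ)
    (hA : 2 ≤ A.length) (hX : 2 ≤ X.length)
    (h : A.flatMap (fun a => X.map (· + f a)) = Dlist K) : False := by
  obtain ⟨Y, u, v, hY⟩ := exists_last_two X hX
  -- first copy
  obtain ⟨a₁, A', hA1⟩ : ∃ a₁ A', A = a₁ :: A' := by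
    cases A with
    | nil => simp at hA
    | cons a l => exact ⟨a, l, rfl⟩
  have hA' : A' ≠ [] := by
    intro hemp
    rw [hA1, hemp] at hA
    simp at hA
  have hrest : A'.flatMap (fun a => X.map (· + f a)) ≠ [] := by
    intro hemp
    obtain ⟨a₂, A'', hA2⟩ : ∃ a₂ A'', A' = a₂ :: A'' := by
      cases A' with
      | nil => exact absurd rfl hA'
      | cons a l => exact ⟨a, l, rfl⟩
    rw [hA2, List.flatMap_cons] at hemp
    have : X.map (· + f a₂) = [] := by
      rcases List.append_eq_nil_iff.mp hemp with ⟨h1, _⟩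
      exact h1
    rw [List.map_eq_nil_iff] at this
    rw [this] at hX
    simp at hX
  have h2 : v - u = 2 := by
    have hD : (Y.map (· + f a₁)) ++ (u + f a₁) :: (v + f a₁) ::
        (A'.flatMap (fun a => X.map (· + f a))) = Dlist K := by
      rw [← h, hA1, List.flatMap_cons, hY]
      simp
    have := (diffD K _ _ _ _ hD).2 hrest
    linarith
  -- last copy
  obtain ⟨A'', b, hA3⟩ : ∃ A'' b, A = A'' ++ [b] := by
    rcases List.eq_nil_or_concat A with h1 | h2
    · rw [h1] at hA; simp at hA
    · obtain ⟨L, b, hL⟩ := h2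
      exact ⟨L, b, by rw [hL, List.concat_eq_append]⟩
  have h7 : v - u = 7 := by
    have hD : ((A''.flatMap (fun a => X.map (· + f a))) ++ Y.map (· + f b)) ++
        (u + f b) :: (v + f b) :: [] = Dlist K := by
      rw [← h, hA3, List.flatMap_append, List.flatMap_cons, hY]
      simp
    have := (diffD K _ _ _ _ hD).1 rfl
    linarith
  omega

lemma range_two (c : ℕ) (h : 2 ≤ c) : ∃ T : List ℕ, List.range c = 0 :: 1 :: T := by
  obtain ⟨c', rfl⟩ : ∃ c', c = c' + 2 := ⟨c - 2, by omega⟩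
  rw [List.range_succ_eq_map, List.range_succ_eq_map]
  exact ⟨((List.range c').map Nat.succ).map Nat.succ, rfl⟩

/-- A list whose shift is an infix of `D` never contains two adjacent entries with
difference 1. In particular a `con c` node with `c ≥ 2` cannot contribute. -/
lemma con_ge_two_contra (K : ℕ) (c : ℕ) (hc : 2 ≤ c) (s : ℤ)
    (h : (((List.range c).map (fun (k : ℕ) => (k:ℤ))).map (· + s)) <:+: Dlist K) : False := by
  obtain ⟨T, hT⟩ := range_two c hc
  rw [hT] at h
  simp only [List.map_cons] at h
  have := diffD_infix K [] ((0:ℕ) + s) ((1:ℕ) + s) _ (by simpa using h)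
  simp at this

/-- Every pool of nodes one of which has a nonempty flatten shift-embedding into `D`
contains a `con 1` node. -/
lemma exists_con (K : ℕ) (G' : DAG) :
    ∀ N : ℕ, ∀ i : Fin G'.m, i.val ≤ N → G'.flattenAt i ≠ [] →
      ∀ s : ℤ, ((G'.flattenAt i).map (· + s)) <:+: Dlist K →
      ∃ z : Fin G'.m, G'.nodes z = DNode.con 1 := by
  intro N
  induction N using Nat.strong_induction_on with
  | _ N IH =>
    intro i hiN hne s hinf
    rcases hn : G'.nodes i with c | ⟨c, d, j⟩ | ⟨I, j⟩ | ps
    · -- con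
      rw [flattenAt_con G' i c hn] at hne hinf
      have hc1 : 1 ≤ c := by
        by_contra hc
        have : c = 0 := by omega
        rw [this] at hne
        simp at hne
      by_cases hc2 : 2 ≤ c
      · exact absurd hinf (by intro h; exact con_ge_two_contra K c hc2 s h)
      · have : c = 1 := by omega
        rw [this] at hn
        exact ⟨i, hn⟩
    · -- vec
      rw [flattenAt_vec G' i c d j hn] at hne hinf
      have hj : G'.flattenAt j ≠ [] := by
        intro hemp
        rw [hemp] at hne
        simp at hne
      have hc : 1 ≤ c := by
        by_contra hc
        have : c = 0 := by omega
        rw [this] at hne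
        simp at hne
      obtain ⟨c', rfl⟩ : ∃ c', c = c' + 1 := ⟨c - 1, by omega⟩
      have hpre : (G'.flattenAt j) <+: ((List.range (c'+1)).flatMap
          (fun (k : ℕ) => (G'.flattenAt j).map (· + (k : ℤ) * d))) := by
        rw [List.range_succ_eq_map, List.flatMap_cons]
        refine ⟨(List.map Nat.succ (List.range c')).flatMap
          (fun (k : ℕ) => (G'.flattenAt j).map (· + (k : ℤ) * d)), ?_⟩
        simp
      have hinf' : ((G'.flattenAt j).map (· + s)) <:+: Dlist K :=
        (hpre.map _).isInfix.trans hinf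
      have hjlt : j.val < i.val := G'.acyc i j (by rw [hn]; simp [DNode.children])
      exact IH j.val (by omega) j (le_refl _) hj s hinf'
    · -- idx
      rw [flattenAt_idx G' i I j hn] at hne hinf
      have hj : G'.flattenAt j ≠ [] := by
        intro hemp
        rw [hemp] at hne
        simp at hne
      obtain ⟨t₁, I', rfl⟩ : ∃ t₁ I', I = t₁ :: I' := by
        cases I with
        | nil => simp at hne
        | cons a l => exact ⟨a, l, rfl⟩
      have hpre : ((G'.flattenAt j).map (· + t₁)) <+:
          ((t₁ :: I').flatMap (fun t => (G'.flattenAt j).map (· + t))) := by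
        rw [List.flatMap_cons]
        exact ⟨_, rfl⟩
      have hinf' : (((G'.flattenAt j).map (· + t₁)).map (· + s)) <:+: Dlist K :=
        (hpre.map _).isInfix.trans hinf
      rw [map_shift_shift] at hinf'
      have hjlt : j.val < i.val := G'.acyc i j (by rw [hn]; simp [DNode.children])
      exact IH j.val (by omega) j (le_refl _) hj _ hinf'
    · -- strc
      rw [flattenAt_strc G' i ps hn] at hne hinf
      obtain ⟨pr, hpr, hprne⟩ : ∃ pr ∈ ps, ((G'.flattenAt pr.2).map (· + pr.1)) ≠ [] := by
        by_contra hall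
        push_neg at hall
        have : ps.flatMap (fun pr => (G'.flattenAt pr.2).map (· + pr.1)) = [] := by
          rw [List.flatMap_eq_nil_iff]
          exact hall
        exact hne this
      have hj : G'.flattenAt pr.2 ≠ [] := by
        intro hemp
        rw [hemp] at hprne
        simp at hprne
      obtain ⟨S, T, hST⟩ := List.append_of_mem hpr
      have hpinf : ((G'.flattenAt pr.2).map (· + pr.1)) <:+:
          (ps.flatMap (fun pr => (G'.flattenAt pr.2).map (· + pr.1))) := by
        rw [hST, List.flatMap_append, List.flatMap_cons]
        exact ⟨S.flatMap (fun pr => (G'.flattenAt pr.2).map (· + pr.1)),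
          T.flatMap (fun pr => (G'.flattenAt pr.2).map (· + pr.1)), by simp⟩
      have hinf' : (((G'.flattenAt pr.2).map (· + pr.1)).map (· + s)) <:+: Dlist K :=
        (hpinf.map _).trans hinf
      rw [map_shift_shift] at hinf'
      have hjlt : pr.2.val < i.val := G'.acyc i pr.2 (by
        rw [hn]; simp only [DNode.children, List.mem_map]; exact ⟨pr, hpr, rfl⟩)
      exact IH pr.2.val (by omega) pr.2 (le_refl _) hj _ hinf'

/-! ### cost counting helpers -/

lemma node_cost_ge (K : ℕ) {m : ℕ} (nd : DNode m) : K ≤ nd.cost K := by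
  cases nd <;> simp [DNode.cost]

lemma cost_ge_one (K : ℕ) (G' : DAG) (a : Fin G'.m) :
    (G'.nodes a).cost K ≤ G'.cost K := by
  apply Finset.single_le_sum (fun i _ => Nat.zero_le _) (Finset.mem_univ a)

lemma cost_ge_two (K : ℕ) (G' : DAG) (a b : Fin G'.m) (hab : a ≠ b) :
    (G'.nodes a).cost K + (G'.nodes b).cost K ≤ G'.cost K := by
  have h1 : ∑ i ∈ ({a, b} : Finset (Fin G'.m)), (G'.nodes i).cost K ≤ G'.cost K :=
    Finset.sum_le_sum_of_subset (Finset.subset_univ _)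
  rwa [Finset.sum_pair hab] at h1

lemma cost_ge_three (K : ℕ) (G' : DAG) (a b c : Fin G'.m)
    (hab : a ≠ b) (hac : a ≠ c) (hbc : b ≠ c) :
    (G'.nodes a).cost K + (G'.nodes b).cost K + (G'.nodes c).cost K ≤ G'.cost K := by
  have h1 : ∑ i ∈ ({a, b, c} : Finset (Fin G'.m)), (G'.nodes i).cost K ≤ G'.cost K :=
    Finset.sum_le_sum_of_subset (Finset.subset_univ _)
  rwa [Finset.sum_insert (by simp [hab, hac]), Finset.sum_pair hbc, ← add_assoc] at h1

lemma flatMap_shift_length {α : Type} (A : List α) (X : List ℤ) (f : α → ℤ) :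
    (A.flatMap (fun a => X.map (· + f a))).length = A.length * X.length := by
  induction A with
  | nil => simp
  | cons a A' ih =>
    rw [List.flatMap_cons, List.length_append, List.length_map, ih, List.length_cons,
      Nat.succ_mul, Nat.add_comm]

lemma sum_length_le {α : Type} (l : List α) (g : α → List ℤ)
    (h : ∀ x ∈ l, (g x).length ≤ 1) : (l.flatMap g).length ≤ l.length := by
  induction l with
  | nil => simp
  | cons a l' ih =>
    rw [List.flatMap_cons, List.length_append, List.length_cons]
    have h1 := h a (by simp)
    have h2 := ih (fun x hx => h x (by simp [hx]))
    omega

/-! ### the lower bound for all DAGs representing `D` -/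

lemma main_aux (K : ℕ) (G' : DAG) :
    ∀ N : ℕ, ∀ i : Fin G'.m, i.val ≤ N →
      (∃ s : ℤ, (G'.flattenAt i).map (· + s) = Dlist K) →
      3*K+4 ≤ G'.cost K := by
  intro N
  induction N using Nat.strong_induction_on with
  | _ N IH =>
    intro i hiN hQ
    obtain ⟨s, hs⟩ := hQ
    have hlenD : (G'.flattenAt i).length = K+4 := by
      have := congrArg List.length hs
      rw [List.length_map] at this
      rw [this, Dlist_length]
    have hFne : G'.flattenAt i ≠ [] := by
      intro hemp
      rw [hemp] at hlenD
      simp at hlenD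
    have hinfD : ((G'.flattenAt i).map (· + s)) <:+: Dlist K := by
      rw [hs]
    obtain ⟨z, hz⟩ := exists_con K G' i.val i (le_refl _) hFne s hinfD
    have hzflat : (G'.flattenAt z).length = 1 := by
      rw [flattenAt_con G' z 1 hz]
      simp
    have hzcost : (G'.nodes z).cost K = K := by
      rw [hz]
      rfl
    rcases hn : G'.nodes i with c | ⟨c, d, j⟩ | ⟨I, j⟩ | ps
    · -- con: impossible
      exfalso
      rw [flattenAt_con G' i c hn] at hlenD hinfD
      apply con_ge_two_contra K c (by rw [List.length_map, List.length_range] at hlenD; omega) s hinfD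
    · -- vec
      rw [flattenAt_vec G' i c d j hn] at hs hlenD hFne
      have hlen2 : c * (G'.flattenAt j).length = K + 4 := by
        rw [flatMap_shift_length, List.length_range] at hlenD
        exact hlenD
      have hjlt : j.val < i.val := G'.acyc i j (by rw [hn]; simp [DNode.children])
      by_cases hc1 : c = 1
      · subst hc1
        apply IH j.val (by omega) j (le_refl _)
        have hR : (List.range 1).flatMap (fun (k : ℕ) => (G'.flattenAt j).map (· + (k:ℤ)*d)) =
            G'.flattenAt j := by
          rw [show List.range 1 = [0] by simp [List.range_succ], List.flatMap_cons,
            List.flatMap_nil]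
          simp
        rw [hR] at hs
        exact ⟨s, hs⟩
      · have hc2 : 2 ≤ c := by
          rcases (by omega : c = 0 ∨ c = 1 ∨ 2 ≤ c) with h0 | h0 | h0
          · rw [h0] at hlen2; simp at hlen2
          · exact absurd h0 hc1
          · exact h0
        have hXcase : (G'.flattenAt j).length = 0 ∨ (G'.flattenAt j).length = 1 ∨
            2 ≤ (G'.flattenAt j).length := by omega
        exfalso
        rcases hXcase with h0 | h1 | hXlen
        · rw [h0] at hlen2; simp at hlen2
        · -- arithmetic sequence: impossible
          obtain ⟨x, hx⟩ := List.length_eq_one_iff.mp h1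
          rw [hx] at hs
          have hc' : c = K + 4 := by
            rw [h1, Nat.mul_one] at hlen2
            exact hlen2
          subst hc'
          have hs2 : (List.range (K+4)).map (fun (k : ℕ) => x + (k:ℤ)*d + s) = Dlist K := by
            rw [← hs, List.map_flatMap,
              ← flatMap_single (List.range (K+4)) (fun (k : ℕ) => x + (k:ℤ)*d + s)]
            rfl
          have hget : ∀ t : ℕ, t < K + 4 →
              x + (t:ℤ)*d + s = (if t = K + 3 then 2*(K:ℤ)+11 else (t:ℤ)*2) := by
            intro t ht
            have h1' : ((List.range (K+4)).map (fun (k : ℕ) => x + (k:ℤ)*d + s))[t]? =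
                some (x + (t:ℤ)*d + s) := by
              rw [List.getElem?_map, List.getElem?_range ht]
              rfl
            rw [hs2, Dlist_getElem? K t ht] at h1'
            exact (Option.some_injective _ h1').symm
          have e0 := hget 0 (by omega)
          have e1 := hget 1 (by omega)
          have e2 := hget (K+2) (by omega)
          have e3 := hget (K+3) (by omega)
          rw [if_neg (by omega)] at e0 e1 e2
          rw [if_pos rfl] at e3
          push_cast at e0 e1 e2 e3
          have hd2 : d = 2 := by linarith
          have hd7 : d = 7 := by linarith
          omega
        · apply copies_contra K (List.range c) (fun k => (k:ℤ)*d + s) (G'.flattenAt j) (by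
            rw [List.length_range]; exact hc2) hXlen
          rw [← hs, List.map_flatMap]
          congr 1
          funext k
          rw [map_shift_shift]
    · -- idx
      rw [flattenAt_idx G' i I j hn] at hs hlenD hFne
      have hlen2 : I.length * (G'.flattenAt j).length = K + 4 := by
        rw [flatMap_shift_length] at hlenD
        exact hlenD
      have hjlt : j.val < i.val := G'.acyc i j (by rw [hn]; simp [DNode.children])
      by_cases hI1 : I.length = 1
      · obtain ⟨t, ht⟩ := List.length_eq_one_iff.mp hI1
        subst ht
        apply IH j.val (by omega) j (le_refl _)
        refine ⟨t + s, ?_⟩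
        rw [← map_shift_shift, ← hs]
        congr 1
        rw [List.flatMap_cons, List.flatMap_nil, List.append_nil]
      · by_cases hX1 : (G'.flattenAt j).length = 1
        · -- flat representation: cost at least (K + (K+4)) + K
          have hIlen : I.length = K + 4 := by
            rw [hX1, Nat.mul_one] at hlen2
            exact hlen2
          have hiz : i ≠ z := by
            intro h
            rw [h, hz] at hn
            simp at hn
          have h1 := cost_ge_two K G' i z hiz
          rw [hn, hzcost] at h1
          have h3 : DNode.cost K (DNode.idx I j) = K + I.length := rfl
          rw [h3, hIlen] at h1
          omega
        · -- at least two copies of length ≥ 2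
          exfalso
          have hIlen : 2 ≤ I.length := by
            rcases (by omega : I.length = 0 ∨ I.length = 1 ∨ 2 ≤ I.length) with h0 | h0 | h0
            · rw [h0] at hlen2; simp at hlen2
            · exact absurd h0 hI1
            · exact h0
          have hXlen : 2 ≤ (G'.flattenAt j).length := by
            rcases (by omega : (G'.flattenAt j).length = 0 ∨ (G'.flattenAt j).length = 1 ∨
              2 ≤ (G'.flattenAt j).length) with h0 | h0 | h0
            · rw [h0] at hlen2; simp at hlen2
            · exact absurd h0 hX1
            · exact h0
          apply copies_contra K I (fun t => t + s) (G'.flattenAt j) hIlen hXlen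
          rw [← hs, List.map_flatMap]
          congr 1
          funext t
          rw [map_shift_shift]
    · -- strc
      rw [flattenAt_strc G' i ps hn] at hs hlenD hFne
      by_cases hbig : ∃ pr ∈ ps, 2 ≤ (G'.flattenAt pr.2).length
      · obtain ⟨pr, hpr, hprlen⟩ := hbig
        have hjlt : pr.2.val < i.val := G'.acyc i pr.2 (by
          rw [hn]; simp only [DNode.children, List.mem_map]; exact ⟨pr, hpr, rfl⟩)
        by_cases hps1 : ps.length ≤ 1
        · -- sole child: recurse
          have hps : ps = [pr] := by
            cases ps with
            | nil => simp at hpr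
            | cons q l =>
              have : l = [] := by
                rw [List.length_cons] at hps1
                exact List.length_eq_zero_iff.mp (by omega)
              subst this
              simp at hpr
              rw [hpr]
          subst hps
          apply IH pr.2.val (by omega) pr.2 (le_refl _)
          refine ⟨pr.1 + s, ?_⟩
          rw [← map_shift_shift, ← hs]
          congr 1
          rw [List.flatMap_cons, List.flatMap_nil, List.append_nil]
        · -- root strc with ≥ 2 entries, a big child, and a con node
          push_neg at hps1
          have hiz : i ≠ z := by
            intro h
            rw [h, hz] at hn
            simp at hn
          have hij : i ≠ pr.2 := by
            intro h
            rw [h] at hjlt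
            omega
          have hzj : z ≠ pr.2 := by
            intro h
            rw [h] at hzflat
            omega
          have h1 := cost_ge_three K G' i z pr.2 hiz hij hzj
          rw [hn, hzcost] at h1
          have h3 : DNode.cost K (DNode.strc ps) = K + 2 * ps.length := rfl
          rw [h3] at h1
          have h2 : K ≤ (G'.nodes pr.2).cost K := node_cost_ge K _
          omega
      · -- all pieces are short: very many entries
        push_neg at hbig
        have hlong : K + 4 ≤ ps.length := by
          have := sum_length_le ps (fun pr => (G'.flattenAt pr.2).map (· + pr.1)) (by
            intro x hx
            rw [List.length_map]
            have := hbig x hx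
            omega)
          omega
        have h1 := cost_ge_one K G' i
        rw [hn] at h1
        have h3 : DNode.cost K (DNode.strc ps) = K + 2 * ps.length := rfl
        rw [h3] at h1
        omega

theorem dag_lower (K : ℕ) (G' : DAG) (h : G'.flatten = Dlist K) :
    3*K+4 ≤ G'.cost K := by
  apply main_aux K G' G'.root.val G'.root (le_refl _)
  refine ⟨0, ?_⟩
  rw [map_shift_zero]
  exact h

/-! ### tree computation helpers -/

lemma flatten_con (c : ℕ) : flatten (.con c) = (List.range c).map (fun (k : ℕ) => (k : ℤ)) := by
  rw [flatten]
  simp only [List.map_id', List.pure_def, List.bind_eq_flatMap, flatMap_single]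

lemma flatten_idx (I : List ℤ) (C : TT) :
    flatten (.idx I C) = I.flatMap (fun s => (flatten C).map (· + s)) := by
  rw [flatten]

lemma cost_con (kc kv ki ks kl c : ℕ) : cost kc kv ki ks kl (.con c) = kc := by
  rw [cost]

lemma cost_vec (kc kv ki ks kl : ℕ) (c : ℕ) (d : ℤ) (C : TT) :
    cost kc kv ki ks kl (.vec c d C) = kv + cost kc kv ki ks kl C := by
  rw [cost]

lemma cost_idx (kc kv ki ks kl : ℕ) (I : List ℤ) (C : TT) :
    cost kc kv ki ks kl (.idx I C) = ki + I.length * kl + cost kc kv ki ks kl C := by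
  rw [cost]

lemma cost_strc (kc kv ki ks kl : ℕ) (ps : List (ℤ × TT)) :
    cost kc kv ki ks kl (.strc ps) =
      ks + 2 * ps.length * kl + (ps.map (fun pr => cost kc kv ki ks kl pr.2)).sum := by
  rw [cost]
  congr 1
  conv_rhs => rw [← List.attach_map_subtype_val ps]
  rw [List.map_map]
  rfl

/-! ### unfoldAt helpers -/

lemma unfoldAt_con (G : DAG) (i : Fin G.m) (c : ℕ) (h : G.nodes i = .con c) :
    G.unfoldAt i = .con c := by
  rw [DAG.unfoldAt]
  split <;> rename_i heq <;> rw [h] at heq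
  · injection heq with h1; rw [h1]
  · exact absurd heq (by simp)
  · exact absurd heq (by simp)
  · exact absurd heq (by simp)

lemma unfoldAt_vec (G : DAG) (i : Fin G.m) (c : ℕ) (d : ℤ) (j : Fin G.m)
    (h : G.nodes i = .vec c d j) : G.unfoldAt i = .vec c d (G.unfoldAt j) := by
  rw [DAG.unfoldAt]
  split <;> rename_i heq <;> rw [h] at heq
  · exact absurd heq (by simp)
  · injection heq with h1 h2 h3
    subst h1; subst h2; subst h3; rfl
  · exact absurd heq (by simp)
  · exact absurd heq (by simp)

lemma unfoldAt_strc (G : DAG) (i : Fin G.m) (ps : List (ℤ × Fin G.m))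
    (h : G.nodes i = .strc ps) :
    G.unfoldAt i = .strc (ps.map (fun pr => (pr.1, G.unfoldAt pr.2))) := by
  rw [DAG.unfoldAt]
  split <;> rename_i heq <;> rw [h] at heq
  · exact absurd heq (by simp)
  · exact absurd heq (by simp)
  · exact absurd heq (by simp)
  · injection heq with h2
    subst h2
    congr 1
    conv_rhs => rw [← List.attach_map_subtype_val ps]
    rw [List.map_map]
    rfl

/-! ### the witness DAG -/

def Gdag (K : ℕ) : DAG where
  m := 3
  hm := by omega
  nodes := fun i =>
    if i.val = 0 then DNode.con 1
    else if i.val = 1 then DNode.vec (K+3) 2 ⟨0, by exact (by omega : (0:ℕ) < 3)⟩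
    else DNode.strc [((0:ℤ), (⟨1, by exact (by omega : (1:ℕ) < 3)⟩ : Fin 3)), (2*(K:ℤ)+11, ⟨0, by exact (by omega : (0:ℕ) < 3)⟩)]
  acyc := by
    intro i j hj
    fin_cases i
    · simp [DNode.children] at hj
    · simp [DNode.children] at hj
      subst hj
      simp
    · simp [DNode.children] at hj
      rcases hj with h | h <;> subst h <;> simp

lemma Gdag_nodes0 (K : ℕ) : (Gdag K).nodes ⟨0, by exact (by omega : (0:ℕ) < 3)⟩ = DNode.con 1 := rfl

lemma Gdag_nodes1 (K : ℕ) :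
    (Gdag K).nodes ⟨1, by exact (by omega : (1:ℕ) < 3)⟩ = DNode.vec (K+3) 2 ⟨0, by exact (by omega : (0:ℕ) < 3)⟩ := rfl

lemma Gdag_nodes2 (K : ℕ) :
    (Gdag K).nodes ⟨2, by exact (by omega : (2:ℕ) < 3)⟩ =
      DNode.strc [((0:ℤ), (⟨1, by exact (by omega : (1:ℕ) < 3)⟩ : Fin 3)), (2*(K:ℤ)+11, ⟨0, by exact (by omega : (0:ℕ) < 3)⟩)] := rfl

lemma Gdag_flatten0 (K : ℕ) : (Gdag K).flattenAt ⟨0, by exact (by omega : (0:ℕ) < 3)⟩ = [(0:ℤ)] := by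
  rw [flattenAt_con _ _ 1 (Gdag_nodes0 K)]
  simp [List.range_succ]

lemma Gdag_flatten1 (K : ℕ) :
    (Gdag K).flattenAt ⟨1, by exact (by omega : (1:ℕ) < 3)⟩ = (List.range (K+3)).map (fun (k : ℕ) => (k:ℤ)*2) := by
  rw [flattenAt_vec _ _ (K+3) 2 ⟨0, by exact (by omega : (0:ℕ) < 3)⟩ (Gdag_nodes1 K), Gdag_flatten0]
  rw [← flatMap_single (List.range (K+3)) (fun (k : ℕ) => (k:ℤ)*2)]
  congr 1
  funext k
  simp

lemma Gdag_root (K : ℕ) : (Gdag K).root = ⟨2, by exact (by omega : (2:ℕ) < 3)⟩ := rfl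

lemma Gdag_flatten (K : ℕ) : (Gdag K).flatten = Dlist K := by
  rw [DAG.flatten, Gdag_root,
    flattenAt_strc _ _ _ (Gdag_nodes2 K)]
  erw [List.flatMap_cons, List.flatMap_cons, List.flatMap_nil]
  erw [Gdag_flatten0, Gdag_flatten1]
  rw [Dlist]
  simp

lemma Gdag_cost (K : ℕ) : (Gdag K).cost K = 3*K+4 := by
  show ∑ i : Fin 3, DNode.cost K ((Gdag K).nodes i) = 3*K+4
  rw [Fin.sum_univ_three]
  show K + K + (K + 2 * 2) = 3*K+4
  omega

lemma Gdag_unfold (K : ℕ) :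
    (Gdag K).unfold = .strc [((0:ℤ), .vec (K+3) 2 (.con 1)), (2*(K:ℤ)+11, .con 1)] := by
  rw [DAG.unfold, Gdag_root, unfoldAt_strc _ _ _ (Gdag_nodes2 K)]
  erw [List.map_cons, List.map_cons, List.map_nil]
  erw [unfoldAt_vec _ _ (K+3) 2 ⟨0, by exact (by omega : (0:ℕ) < 3)⟩ (Gdag_nodes1 K),
    unfoldAt_con _ _ 1 (Gdag_nodes0 K)]

theorem stmt18' (K : ℕ) (hK : 0 < K) :
    ∃ (D : List ℤ) (G : DAG),
      G.flatten = D ∧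
      (∀ G' : DAG, G'.flatten = D → G.cost K ≤ G'.cost K) ∧
      ∃ T' : TT, flatten T' = D ∧
        cost K K K K 1 T' < cost K K K K 1 G.unfold := by
  refine ⟨Dlist K, Gdag K, Gdag_flatten K, ?_, ?_⟩
  · intro G' h
    rw [Gdag_cost]
    exact dag_lower K G' h
  · refine ⟨.idx (Dlist K) (.con 1), ?_, ?_⟩
    · rw [flatten_idx, flatten_con]
      rw [show (List.range 1).map (fun (k : ℕ) => (k:ℤ)) = [(0:ℤ)] by simp [List.range_succ]]
      simp only [List.map_cons, List.map_nil, zero_add]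
      rw [flatMap_single (Dlist K) (fun s => s)]
      exact List.map_id _
    · rw [Gdag_unfold, cost_idx, cost_con, cost_strc]
      simp only [List.map_cons, List.map_nil, cost_vec, cost_con]
      rw [Dlist_length]
      simp only [List.length_cons, List.length_nil, List.sum_cons, List.sum_nil]
      omega

/-- Unfolding a cost-minimal type DAG does not necessarily yield a cost-optimal type
tree: for some displacement sequence `D`, some cost-minimal DAG representing `D`
unfolds to a tree that is beaten by another tree representing `D`. -/
theorem stmt18 (K : ℕ) (hK : 0 < K) :
    ∃ (D : List ℤ) (G : DAG),
      G.flatten = D ∧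
      (∀ G' : DAG, G'.flatten = D → G.cost K ≤ G'.cost K) ∧
      ∃ T' : TT, flatten T' = D ∧
        cost K K K K 1 T' < cost K K K K 1 G.unfold :=
  stmt18' K hK
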